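/- Let B be a unital C*-algebra, let ζ be a complex number with |ζ| = 1, let d = (d_1,…,d_n) ∈ ℤⁿ, let a_{ij}, b_{ij} ∈ B (1 ≤ i,j ≤ n) satisfy the graded commutation relations b_{kl} a_{ij} = ζ^{(d_l−d_k)(d_j−d_i)} a_{ij} b_{kl} for all i,j,k,l, and let F ∈ GL(n,ℂ) with inverse F⁻¹. Set U_{ij} = Σ_{k=1}^n a_{ik} b_{kj}. Then, with scalar matrices acting on M_n(B) via the algebra map ℂ → B, the matrix F Ū_ζ F⁻¹ equals the product (F ā_ζ F⁻¹)·(F b̄_ζ F⁻¹) in M_n(B), i.e. (F Ū_ζ F⁻¹)_{ij} = Σ_{l=1}^n (F ā_ζ F⁻¹)_{il} (F b̄_ζ F⁻¹)_{lj} for all i,j. (This is the computation in the construction of the comultiplication of the braided free unitary quantum group showing Δ(u′_{ij}) = Σ_l j₁(u′_{il}) j₂(u′_{lj}) for u′ = F ū_ζ F⁻¹.) -/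

import Mathlib

/-- The ζ-conjugate matrix `q̄_ζ`, defined entrywise by
`(q̄_ζ) i j = ζ^(dᵢ(dⱼ−dᵢ)) • (q i j)*`. -/
noncomputable def zetaConj {n : ℕ} {B : Type*} [Ring B] [StarRing B] [Module ℂ B]
    (ζ : ℂ) (d : Fin n → ℤ) (q : Matrix (Fin n) (Fin n) B) : Matrix (Fin n) (Fin n) B :=
  Matrix.of fun i j => ζ ^ (d i * (d j - d i)) • star (q i j)

/-- under the graded commutation relations, for an invertible scalar matrix
`F ∈ GL(n, ℂ)` one has `F Ū_ζ F⁻¹ = (F ā_ζ F⁻¹) * (F b̄_ζ F⁻¹)` in `Mₙ(B)`,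
where `U i j = ∑ k, a i k * b k j`. -/
theorem stmt2 {n : ℕ} {B : Type*} [CStarAlgebra B]
    (ζ : ℂ) (hζ : ‖ζ‖ = 1) (d : Fin n → ℤ)
    (a b : Fin n → Fin n → B)
    (hab : ∀ i j k l, b k l * a i j = ζ ^ ((d l - d k) * (d j - d i)) • (a i j * b k l))
    (F : Matrix (Fin n) (Fin n) ℂ) (hF : IsUnit F)
    (U : Matrix (Fin n) (Fin n) B)
    (hU : ∀ i j, U i j = ∑ k, a i k * b k j) :
    F.map (algebraMap ℂ B) * zetaConj ζ d U * (F⁻¹).map (algebraMap ℂ B) =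
      (F.map (algebraMap ℂ B) * zetaConj ζ d (Matrix.of a) * (F⁻¹).map (algebraMap ℂ B)) *
      (F.map (algebraMap ℂ B) * zetaConj ζ d (Matrix.of b) * (F⁻¹).map (algebraMap ℂ B)) := by
  have hζ0 : ζ ≠ 0 := by
    intro h; rw [h] at hζ; simp at hζ
  have hconj : (starRingEnd ℂ) ζ = ζ⁻¹ := by
    have h1 : ζ * (starRingEnd ℂ) ζ = 1 := by
      rw [Complex.mul_conj]
      norm_cast
      rw [Complex.normSq_eq_norm_sq]
      simp [hζ]
    exact eq_inv_of_mul_eq_one_left (by rw [mul_comm] at h1; exact h1)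
  have key : ∀ i j k : Fin n,
      (ζ ^ (d i * (d j - d i))) • (star (b k j) * star (a i k)) =
      (ζ ^ (d i * (d k - d i)) • star (a i k)) * (ζ ^ (d k * (d j - d k)) • star (b k j)) := by
    intro i j k
    have h := congrArg star (hab i k k j)
    rw [star_mul, star_smul, star_mul] at h
    set e : ℤ := (d j - d k) * (d k - d i) with he
    have hc : star (ζ ^ e) = ζ ^ (-e) := by
      rw [show (star (ζ ^ e) : ℂ) = (starRingEnd ℂ) (ζ ^ e) from rfl,
        map_zpow₀, hconj, inv_zpow, ← zpow_neg]
    rw [hc] at h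
    -- h : star (a i k) * star (b k j) = ζ ^ (-e) • (star (b k j) * star (a i k))
    have h2 : star (b k j) * star (a i k) = ζ ^ e • (star (a i k) * star (b k j)) := by
      rw [h, smul_smul, ← zpow_add₀ hζ0]
      simp
    rw [h2, smul_smul, smul_mul_assoc, mul_smul_comm, smul_smul,
      ← zpow_add₀ hζ0, ← zpow_add₀ hζ0]
    congr 1
    rw [he]; ring
  have hmain : zetaConj ζ d U = zetaConj ζ d (Matrix.of a) * zetaConj ζ d (Matrix.of b) := by
    ext i j
    simp only [zetaConj, Matrix.mul_apply, Matrix.of_apply, hU, star_sum, Finset.smul_sum]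
    refine Finset.sum_congr rfl fun k _ => ?_
    rw [star_mul]
    exact key i j k
  set M := F.map (algebraMap ℂ B)
  set N := (F⁻¹).map (algebraMap ℂ B)
  have hinv : N * M = 1 := by
    have hdet : IsUnit F.det := (Matrix.isUnit_iff_isUnit_det F).mp hF
    have : (F⁻¹ * F).map (algebraMap ℂ B) = N * M := by
      rw [Matrix.map_mul]
    rw [← this, Matrix.nonsing_inv_mul F hdet, Matrix.map_one _ (map_zero _) (map_one _)]
  rw [hmain]
  calc M * (zetaConj ζ d (Matrix.of a) * zetaConj ζ d (Matrix.of b)) * N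
      = M * zetaConj ζ d (Matrix.of a) * (N * M) * (zetaConj ζ d (Matrix.of b) * N) := by
        rw [hinv]; noncomm_ring
    _ = (M * zetaConj ζ d (Matrix.of a) * N) * (M * zetaConj ζ d (Matrix.of b) * N) := by
        noncomm_ring
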